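/- Let S be a covering structure of a covering map p : X → Y. The following are equivalent: (a) S is an overlay structure, i.e., for every x ∈ X the star st(x, S) is a slice of p; (b) whenever a slice U ∈ S intersects two distinct slices V, W ∈ S, one has p(V) ≠ p(W); (c) whenever two slices U, V ∈ S intersect, U ∩ V is a slice over p(U) ∩ p(V), i.e., p restricts to a homeomorphism of U ∩ V onto p(U) ∩ p(V). -/

import Mathlib

open Set Pointwise

/-- `p` restricts to a homeomorphism of `U ⊆ X` onto `V ⊆ Y`. -/
def RestrictsToHomeo {X Y : Type*} [TopologicalSpace X] [TopologicalSpace Y]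
    (p : X → Y) (U : Set X) (V : Set Y) : Prop :=
  ∃ e : U ≃ₜ V, ∀ u : U, (e u : Y) = p u

/-- A **slice** of `p : X → Y`: an open set `U ⊆ X` such that `p ⁻¹' (p '' U)` is a
disjoint union of open sets, one of which is `U`, each mapped by `p` homeomorphically
onto `p '' U`. -/
def IsSlice {X Y : Type*} [TopologicalSpace X] [TopologicalSpace Y]
    (p : X → Y) (U : Set X) : Prop :=
  IsOpen U ∧ ∃ D : Set (Set X), U ∈ D ∧ (∀ W ∈ D, IsOpen W) ∧
    D.PairwiseDisjoint id ∧ ⋃₀ D = p ⁻¹' (p '' U) ∧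
    ∀ W ∈ D, RestrictsToHomeo p W (p '' U)

/-- A **covering structure** of `p : X → Y`: an open cover `S` of `X` by slices of `p`
such that for each `U ∈ S`, `p ⁻¹' (p '' U)` is a disjoint union of elements of `S`,
each with image `p '' U`. -/
def IsCoveringStructure {X Y : Type*} [TopologicalSpace X] [TopologicalSpace Y]
    (p : X → Y) (S : Set (Set X)) : Prop :=
  (∀ U ∈ S, IsSlice p U) ∧ ⋃₀ S = Set.univ ∧
    ∀ U ∈ S, ∃ D ⊆ S, D.PairwiseDisjoint id ∧ ⋃₀ D = p ⁻¹' (p '' U) ∧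
      ∀ W ∈ D, p '' W = p '' U

/-- The **star** of a point `x` with respect to a family `S` of subsets. -/
def st {X : Type*} (x : X) (S : Set (Set X)) : Set X := ⋃₀ {U | U ∈ S ∧ x ∈ U}

/-- An **overlay structure** of `p : X → Y`: a covering structure `S` such that for every
`x ∈ X` the star `st x S` is a slice of `p`. -/
def IsOverlayStructure {X Y : Type*} [TopologicalSpace X] [TopologicalSpace Y]
    (p : X → Y) (S : Set (Set X)) : Prop :=
  IsCoveringStructure p S ∧ ∀ x : X, IsSlice p (st x S)

/-- `p` is an **overlay** if it admits an overlay structure. -/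
def IsOverlay {X Y : Type*} [TopologicalSpace X] [TopologicalSpace Y]
    (p : X → Y) : Prop :=
  ∃ S : Set (Set X), IsOverlayStructure p S

section helpers

variable {X Y : Type*} [TopologicalSpace X] [TopologicalSpace Y] {p : X → Y}

lemma RestrictsToHomeo.image_eq' {U : Set X} {V : Set Y}
    (h : RestrictsToHomeo p U V) : p '' U = V := by
  obtain ⟨e, he⟩ := h
  ext y
  constructor
  · rintro ⟨u, hu, rfl⟩
    rw [← he ⟨u, hu⟩]
    exact (e ⟨u, hu⟩).2
  · intro hy
    obtain ⟨u, hu⟩ := e.surjective ⟨y, hy⟩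
    exact ⟨u, u.2, by rw [← he u, hu]⟩

lemma RestrictsToHomeo.injOn' {U : Set X} {V : Set Y}
    (h : RestrictsToHomeo p U V) : Set.InjOn p U := by
  obtain ⟨e, he⟩ := h
  intro a ha b hb hab
  have h1 : e ⟨a, ha⟩ = e ⟨b, hb⟩ := Subtype.ext (by rw [he, he]; exact hab)
  exact congrArg Subtype.val (e.injective h1)

lemma restrictsToHomeo_of_injOn (hc : Continuous p) (ho : IsOpenMap p) {U : Set X}
    (hU : IsOpen U) (hinj : Set.InjOn p U) : RestrictsToHomeo p U (p '' U) := by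
  let e : U ≃ (p '' U) := Equiv.Set.imageOfInjOn p U hinj
  have hce : Continuous e := Continuous.subtype_mk (hc.comp continuous_subtype_val) _
  have hoe : IsOpenMap e := by
    intro o hoo
    rw [isOpen_induced_iff] at hoo
    obtain ⟨O, hO, rfl⟩ := hoo
    rw [isOpen_induced_iff]
    refine ⟨p '' (U ∩ O), ho _ (hU.inter hO), ?_⟩
    ext ⟨y, hy⟩
    constructor
    · rintro ⟨u, ⟨huU, huO⟩, rfl⟩
      exact ⟨⟨u, huU⟩, huO, rfl⟩
    · rintro ⟨⟨u, huU⟩, huO, h⟩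
      exact ⟨u, ⟨huU, huO⟩, congrArg Subtype.val h⟩
  exact ⟨e.toHomeomorphOfContinuousOpen hce hoe, fun u => rfl⟩

end helpers

/-- Let `S` be a covering structure of a covering map `p : X → Y`.  The following are
equivalent: (a) `S` is an overlay structure, i.e. every star `st x S` is a slice of `p`;
(b) if a slice `U ∈ S` intersects two distinct slices `V, W ∈ S`, then `p '' V ≠ p '' W`;
(c) if two slices `U, V ∈ S` intersect, then `U ∩ V` is a slice over `p '' U ∩ p '' V`,
i.e. `p` restricts to a homeomorphism of `U ∩ V` onto `p '' U ∩ p '' V`. -/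
theorem overlay_structure_characterizations
    {X Y : Type*} [TopologicalSpace X] [TopologicalSpace Y]
    (p : X → Y) (hp : IsCoveringMap p)
    (S : Set (Set X)) (hS : IsCoveringStructure p S) :
    ((∀ x : X, IsSlice p (st x S)) ↔
      (∀ U ∈ S, ∀ V ∈ S, ∀ W ∈ S,
        (U ∩ V).Nonempty → (U ∩ W).Nonempty → V ≠ W → p '' V ≠ p '' W)) ∧
    ((∀ U ∈ S, ∀ V ∈ S, ∀ W ∈ S,
        (U ∩ V).Nonempty → (U ∩ W).Nonempty → V ≠ W → p '' V ≠ p '' W) ↔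
      (∀ U ∈ S, ∀ V ∈ S, (U ∩ V).Nonempty →
        RestrictsToHomeo p (U ∩ V) (p '' U ∩ p '' V))) := by
  obtain ⟨hslice, hcover, hdecomp⟩ := hS
  have hopenmap : IsOpenMap p := hp.isOpenMap
  have hcont : Continuous p := hp.continuous
  have hinj : ∀ U ∈ S, InjOn p U := by
    intro U hU
    obtain ⟨-, D, hUD, -, -, -, hh⟩ := hslice U hU
    exact (hh U hUD).injOn'
  have hopen : ∀ U ∈ S, IsOpen U := fun U hU => (hslice U hU).1
  have hmem : ∀ x : X, ∃ U ∈ S, x ∈ U := by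
    intro x
    have hx : x ∈ ⋃₀ S := hcover ▸ mem_univ x
    exact hx
  have htrans : ∀ V ∈ S, ∀ x' : X, p x' ∈ p '' V →
      ∃ V' ∈ S, x' ∈ V' ∧ p '' V' = p '' V := by
    intro V hV x' hx'
    obtain ⟨D, hDS, -, hDcov, hDim⟩ := hdecomp V hV
    have hx'D : x' ∈ ⋃₀ D := by rw [hDcov]; exact hx'
    obtain ⟨V', hV'D, hx'V'⟩ := hx'D
    exact ⟨V', hDS hV'D, hx'V', hDim V' hV'D⟩
  -- (b) → (c)
  have hbc : (∀ U ∈ S, ∀ V ∈ S, ∀ W ∈ S,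
        (U ∩ V).Nonempty → (U ∩ W).Nonempty → V ≠ W → p '' V ≠ p '' W) →
      (∀ U ∈ S, ∀ V ∈ S, (U ∩ V).Nonempty →
        RestrictsToHomeo p (U ∩ V) (p '' U ∩ p '' V)) := by
    intro hb U hU V hV hne
    have heq : p '' (U ∩ V) = p '' U ∩ p '' V := by
      refine Subset.antisymm (image_inter_subset p U V) ?_
      rintro y ⟨⟨u, hu, rfl⟩, hyV⟩
      obtain ⟨W', hW'S, huW', hW'img⟩ := htrans V hV u hyV
      by_cases h : W' = V
      · exact ⟨u, ⟨hu, h ▸ huW'⟩, rfl⟩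
      · exact absurd hW'img.symm
          (hb U hU V hV W' hW'S hne ⟨u, hu, huW'⟩ (Ne.symm h))
    rw [← heq]
    exact restrictsToHomeo_of_injOn hcont hopenmap ((hopen U hU).inter (hopen V hV))
      ((hinj U hU).mono inter_subset_left)
  -- (c) → (b)
  have hcb : (∀ U ∈ S, ∀ V ∈ S, (U ∩ V).Nonempty →
        RestrictsToHomeo p (U ∩ V) (p '' U ∩ p '' V)) →
      (∀ U ∈ S, ∀ V ∈ S, ∀ W ∈ S,
        (U ∩ V).Nonempty → (U ∩ W).Nonempty → V ≠ W → p '' V ≠ p '' W) := by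
    intro hc U hU V hV W hW hUV hUW hVW heq
    obtain ⟨a, haU, haV⟩ := hUV
    have h1 : p '' (U ∩ V) = p '' U ∩ p '' V := (hc U hU V hV ⟨a, haU, haV⟩).image_eq'
    have h2 : p '' (U ∩ W) = p '' U ∩ p '' W := (hc U hU W hW hUW).image_eq'
    have hpa : p a ∈ p '' (U ∩ W) := by
      rw [h2, ← heq, ← h1]
      exact mem_image_of_mem p ⟨haU, haV⟩
    obtain ⟨a', ⟨ha'U, ha'W⟩, ha'⟩ := hpa
    have haa : a' = a := hinj U hU ha'U haU ha'
    subst haa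
    have hVWne : (V ∩ W).Nonempty := ⟨a', haV, ha'W⟩
    have h3 : p '' (V ∩ W) = p '' V ∩ p '' W := (hc V hV W hW hVWne).image_eq'
    apply hVW
    ext z
    constructor
    · intro hzV
      have hz : p z ∈ p '' (V ∩ W) := by
        rw [h3, ← heq]
        exact ⟨mem_image_of_mem p hzV, mem_image_of_mem p hzV⟩
      obtain ⟨c, ⟨hcV, hcW⟩, hc'⟩ := hz
      exact hinj V hV hcV hzV hc' ▸ hcW
    · intro hzW
      have hz : p z ∈ p '' (V ∩ W) := by
        rw [h3, heq]
        exact ⟨mem_image_of_mem p hzW, mem_image_of_mem p hzW⟩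
      obtain ⟨c, ⟨hcV, hcW⟩, hc'⟩ := hz
      exact hinj W hW hcW hzW hc' ▸ hcV
  -- (a) → (b)
  have hab : (∀ x : X, IsSlice p (st x S)) →
      (∀ U ∈ S, ∀ V ∈ S, ∀ W ∈ S,
        (U ∩ V).Nonempty → (U ∩ W).Nonempty → V ≠ W → p '' V ≠ p '' W) := by
    intro ha U hU V hV W hW hUV hUW hVW heq
    obtain ⟨a, haU, haV⟩ := hUV
    obtain ⟨b, hbU, hbW⟩ := hUW
    have hstinj : ∀ z : X, InjOn p (st z S) := by
      intro z
      obtain ⟨-, D, hUD, -, -, -, hh⟩ := ha z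
      exact (hh _ hUD).injOn'
    have hpaW : p a ∈ p '' W := heq ▸ mem_image_of_mem p haV
    obtain ⟨c, hcW, hcp⟩ := hpaW
    have hac : a = c := hstinj b ⟨U, ⟨hU, hbU⟩, haU⟩ ⟨W, ⟨hW, hbW⟩, hcW⟩ hcp.symm
    have haW : a ∈ W := hac ▸ hcW
    apply hVW
    ext z
    constructor
    · intro hzV
      have : p z ∈ p '' W := heq ▸ mem_image_of_mem p hzV
      obtain ⟨w, hwW, hwp⟩ := this
      have : z = w := hstinj a ⟨V, ⟨hV, haV⟩, hzV⟩ ⟨W, ⟨hW, haW⟩, hwW⟩ hwp.symm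
      exact this ▸ hwW
    · intro hzW
      have : p z ∈ p '' V := heq ▸ mem_image_of_mem p hzW
      obtain ⟨v, hvV, hvp⟩ := this
      have : z = v := hstinj a ⟨W, ⟨hW, haW⟩, hzW⟩ ⟨V, ⟨hV, haV⟩, hvV⟩ hvp.symm
      exact this ▸ hvV
  -- (b) → (a)
  have hba : (∀ U ∈ S, ∀ V ∈ S, ∀ W ∈ S,
        (U ∩ V).Nonempty → (U ∩ W).Nonempty → V ≠ W → p '' V ≠ p '' W) →
      (∀ x : X, IsSlice p (st x S)) := by
    intro hb x
    have hc := hbc hb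
    have hstopen : ∀ z : X, IsOpen (st z S) :=
      fun z => isOpen_sUnion (fun U hU => hopen U hU.1)
    have hstmem : ∀ z : X, z ∈ st z S := by
      intro z
      obtain ⟨U, hU, hzU⟩ := hmem z
      exact ⟨U, ⟨hU, hzU⟩, hzU⟩
    have hstinj : ∀ z : X, InjOn p (st z S) := by
      intro z a ha b hb' hab
      obtain ⟨V, ⟨hVS, hzV⟩, haV⟩ := ha
      obtain ⟨V', ⟨hV'S, hzV'⟩, hbV'⟩ := hb'
      have himg := (hc V hVS V' hV'S ⟨z, hzV, hzV'⟩).image_eq'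
      have hpa : p a ∈ p '' (V ∩ V') := by
        rw [himg]
        exact ⟨mem_image_of_mem p haV, hab ▸ mem_image_of_mem p hbV'⟩
      obtain ⟨cc, ⟨hcV, hcV'⟩, hcp⟩ := hpa
      rw [← hinj V hVS hcV haV hcp, ← hinj V' hV'S hcV' hbV' (hcp.trans hab)]
    have hmono : ∀ z z' : X, p z' = p z → p '' st z S ⊆ p '' st z' S := by
      rintro z z' hpz y ⟨a, ⟨V, ⟨hVS, hzV⟩, haV⟩, rfl⟩
      obtain ⟨V', hV'S, hz'V', himgV'⟩ := htrans V hVS z' (hpz ▸ mem_image_of_mem p hzV)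
      have hpa : p a ∈ p '' V' := himgV' ▸ mem_image_of_mem p haV
      obtain ⟨a', ha', hpa'⟩ := hpa
      exact ⟨a', ⟨V', ⟨hV'S, hz'V'⟩, ha'⟩, hpa'⟩
    have hsame : ∀ z' : X, p z' = p x → p '' st z' S = p '' st x S :=
      fun z' hz => Subset.antisymm (hmono z' x hz.symm) (hmono x z' hz)
    have hfibeq : ∀ z' z'' : X, p z' = p x → p z'' = p x →
        (st z' S ∩ st z'' S).Nonempty → z' = z'' := by
      rintro z' z'' hz' hz'' ⟨w, hw1, hw2⟩
      obtain ⟨V, ⟨hVS, hz'V⟩, hwV⟩ := hw1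
      obtain ⟨V'', ⟨hV''S, hz''V''⟩, hwV''⟩ := hw2
      have himg := (hc V hVS V'' hV''S ⟨w, hwV, hwV''⟩).image_eq'
      have hpz : p z' ∈ p '' (V ∩ V'') := by
        rw [himg]
        refine ⟨mem_image_of_mem p hz'V, ?_⟩
        rw [hz', ← hz'']
        exact mem_image_of_mem p hz''V''
      obtain ⟨cc, ⟨hcV, hcV''⟩, hcp⟩ := hpz
      rw [← hinj V hVS hcV hz'V hcp,
        ← hinj V'' hV''S hcV'' hz''V'' (by rw [hcp, hz', hz''])]
    refine ⟨hstopen x, (fun z : X => st z S) '' (p ⁻¹' {p x}), ⟨x, rfl, rfl⟩,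
      ?_, ?_, ?_, ?_⟩
    · rintro W ⟨z, -, rfl⟩
      exact hstopen z
    · rintro A ⟨z', hz', rfl⟩ B ⟨z'', hz'', rfl⟩ hne
      by_contra hdis
      rw [Set.not_disjoint_iff] at hdis
      obtain ⟨w, hw1, hw2⟩ := hdis
      exact hne (by rw [hfibeq z' z'' hz' hz'' ⟨w, hw1, hw2⟩])
    · apply Subset.antisymm
      · rintro z ⟨A, ⟨z', hz', rfl⟩, hz⟩
        show p z ∈ p '' st x S
        exact (hsame z' hz') ▸ mem_image_of_mem p hz
      · intro z hz
        obtain ⟨a, ⟨V, ⟨hVS, hxV⟩, haV⟩, hpz⟩ := hz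
        obtain ⟨W, hWS, hzW, hWimg⟩ := htrans V hVS z (hpz ▸ mem_image_of_mem p haV)
        have hpx : p x ∈ p '' W := hWimg ▸ mem_image_of_mem p hxV
        obtain ⟨x', hx'W, hx'p⟩ := hpx
        exact ⟨st x' S, ⟨x', hx'p, rfl⟩, ⟨W, ⟨hWS, hx'W⟩, hzW⟩⟩
    · rintro W ⟨z', hz', rfl⟩
      have := restrictsToHomeo_of_injOn hcont hopenmap (hstopen z') (hstinj z')
      rwa [hsame z' hz'] at this
  exact ⟨⟨hab, hba⟩, ⟨hbc, hcb⟩⟩
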